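/- Combining the previous two identities: if a : Matrix (Fin m) (Fin m) ℂ is Hermitian positive definite, c : Fin m → Fin k → Fin k → ℂ is antisymmetric in its last two indices, d : Fin m → Fin k → Fin k → ℂ satisfies ∑_r d i r r = 0 for all i, and for all r s : Fin k we have ∑_{i,j} a i j * (d i r r * conj(d j s s) − d i s r * conj(d j s r) + d i s s * conj(d j r r) − d i r s * conj(d j r s) + c i r s * conj(c j s r)) = 0, then c = 0 and d = 0. -/

import Mathlib

open scoped BigOperators ComplexOrder

theorem skt_balanced_main_algebraic
    {m k : ℕ} (a : Matrix (Fin m) (Fin m) ℂ) (ha : a.PosDef)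
    (c d : Fin m → Fin k → Fin k → ℂ)
    (hc : ∀ i r s, c i r s = - c i s r)
    (hbal : ∀ i : Fin m, ∑ r : Fin k, d i r r = 0)
    (hSKT : ∀ r s : Fin k, ∑ i : Fin m, ∑ j : Fin m, a i j *
        (d i r r * (starRingEnd ℂ) (d j s s)
          - d i s r * (starRingEnd ℂ) (d j s r)
          + d i s s * (starRingEnd ℂ) (d j r r)
          - d i r s * (starRingEnd ℂ) (d j r s)
          + c i r s * (starRingEnd ℂ) (c j s r)) = 0) :
    c = 0 ∧ d = 0 := by
  classical
  have comm4 : ∀ (f : Fin k → Fin k → Fin m → Fin m → ℂ),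
      ∑ r : Fin k, ∑ s : Fin k, ∑ i : Fin m, ∑ j : Fin m, f r s i j
        = ∑ i : Fin m, ∑ j : Fin m, ∑ r : Fin k, ∑ s : Fin k, f r s i j := by
    intro f
    calc ∑ r, ∑ s, ∑ i, ∑ j, f r s i j
        = ∑ r, ∑ i, ∑ s, ∑ j, f r s i j :=
          Finset.sum_congr rfl (fun r _ => Finset.sum_comm)
      _ = ∑ i, ∑ r, ∑ s, ∑ j, f r s i j := Finset.sum_comm
      _ = ∑ i, ∑ r, ∑ j, ∑ s, f r s i j :=
          Finset.sum_congr rfl (fun i _ =>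
            Finset.sum_congr rfl (fun r _ => Finset.sum_comm))
      _ = ∑ i, ∑ j, ∑ r, ∑ s, f r s i j :=
          Finset.sum_congr rfl (fun i _ => Finset.sum_comm)
  -- key pointwise identity
  have key : ∀ i j : Fin m,
      ∑ r : Fin k, ∑ s : Fin k,
        (d i r r * (starRingEnd ℂ) (d j s s)
          - d i s r * (starRingEnd ℂ) (d j s r)
          + d i s s * (starRingEnd ℂ) (d j r r)
          - d i r s * (starRingEnd ℂ) (d j r s)
          + c i r s * (starRingEnd ℂ) (c j s r))
      = -(2 * ∑ p : Fin k, ∑ q : Fin k, d i p q * (starRingEnd ℂ) (d j p q)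
          + ∑ p : Fin k, ∑ q : Fin k, c i p q * (starRingEnd ℂ) (c j p q)) := by
    intro i j
    have h1 : ∑ r : Fin k, ∑ s : Fin k, d i r r * (starRingEnd ℂ) (d j s s) = 0 := by
      simp_rw [← Finset.mul_sum, ← Finset.sum_mul, hbal i, zero_mul]
    have h2 : ∑ r : Fin k, ∑ s : Fin k, d i s s * (starRingEnd ℂ) (d j r r) = 0 := by
      simp_rw [← Finset.sum_mul, hbal i, zero_mul, Finset.sum_const_zero]
    have h3 : ∑ r : Fin k, ∑ s : Fin k, d i s r * (starRingEnd ℂ) (d j s r)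
        = ∑ p : Fin k, ∑ q : Fin k, d i p q * (starRingEnd ℂ) (d j p q) :=
      Finset.sum_comm
    have h5 : ∑ r : Fin k, ∑ s : Fin k, c i r s * (starRingEnd ℂ) (c j s r)
        = - ∑ p : Fin k, ∑ q : Fin k, c i p q * (starRingEnd ℂ) (c j p q) := by
      rw [← Finset.sum_neg_distrib]
      refine Finset.sum_congr rfl fun r _ => ?_
      rw [← Finset.sum_neg_distrib]
      refine Finset.sum_congr rfl fun s _ => ?_
      rw [hc j s r]
      simp [mul_comm]
    calc ∑ r : Fin k, ∑ s : Fin k,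
          (d i r r * (starRingEnd ℂ) (d j s s)
            - d i s r * (starRingEnd ℂ) (d j s r)
            + d i s s * (starRingEnd ℂ) (d j r r)
            - d i r s * (starRingEnd ℂ) (d j r s)
            + c i r s * (starRingEnd ℂ) (c j s r))
        = (∑ r : Fin k, ∑ s : Fin k, d i r r * (starRingEnd ℂ) (d j s s))
          - (∑ r : Fin k, ∑ s : Fin k, d i s r * (starRingEnd ℂ) (d j s r))
          + (∑ r : Fin k, ∑ s : Fin k, d i s s * (starRingEnd ℂ) (d j r r))
          - (∑ r : Fin k, ∑ s : Fin k, d i r s * (starRingEnd ℂ) (d j r s))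
          + (∑ r : Fin k, ∑ s : Fin k, c i r s * (starRingEnd ℂ) (c j s r)) := by
          simp only [sub_eq_add_neg, Finset.sum_add_distrib, Finset.sum_neg_distrib]
      _ = -(2 * ∑ p : Fin k, ∑ q : Fin k, d i p q * (starRingEnd ℂ) (d j p q)
          + ∑ p : Fin k, ∑ q : Fin k, c i p q * (starRingEnd ℂ) (c j p q)) := by
          rw [h1, h2, h3, h5]; ring
  -- total sum is zero, with sums swapped
  have total : ∑ i : Fin m, ∑ j : Fin m, ∑ r : Fin k, ∑ s : Fin k, a i j *
        (d i r r * (starRingEnd ℂ) (d j s s)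
          - d i s r * (starRingEnd ℂ) (d j s r)
          + d i s s * (starRingEnd ℂ) (d j r r)
          - d i r s * (starRingEnd ℂ) (d j r s)
          + c i r s * (starRingEnd ℂ) (c j s r)) = 0 := by
    rw [← comm4]
    exact Finset.sum_eq_zero fun r _ => Finset.sum_eq_zero fun s _ => hSKT r s
  have this0 : ∑ i : Fin m, ∑ j : Fin m, a i j *
        (2 * (∑ p : Fin k, ∑ q : Fin k, d i p q * (starRingEnd ℂ) (d j p q))
          + ∑ p : Fin k, ∑ q : Fin k, c i p q * (starRingEnd ℂ) (c j p q)) = 0 := by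
    have h : ∑ i : Fin m, ∑ j : Fin m, -(a i j *
        (2 * (∑ p : Fin k, ∑ q : Fin k, d i p q * (starRingEnd ℂ) (d j p q))
          + ∑ p : Fin k, ∑ q : Fin k, c i p q * (starRingEnd ℂ) (c j p q))) = 0 := by
      rw [← total]
      refine Finset.sum_congr rfl fun i _ => Finset.sum_congr rfl fun j _ => ?_
      rw [← mul_neg, ← key i j]
      simp_rw [Finset.mul_sum]
    simpa [Finset.sum_neg_distrib, neg_eq_zero] using h
  -- the sum of nonneg quadratic-form slices is zero
  have hA : ∑ p : Fin k, ∑ q : Fin k,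
      (2 * (∑ i : Fin m, ∑ j : Fin m, a i j * (d i p q * (starRingEnd ℂ) (d j p q)))
        + ∑ i : Fin m, ∑ j : Fin m, a i j * (c i p q * (starRingEnd ℂ) (c j p q))) = 0 := by
    have expand : ∀ p q : Fin k,
        2 * (∑ i : Fin m, ∑ j : Fin m, a i j * (d i p q * (starRingEnd ℂ) (d j p q)))
          + ∑ i : Fin m, ∑ j : Fin m, a i j * (c i p q * (starRingEnd ℂ) (c j p q))
        = ∑ i : Fin m, ∑ j : Fin m,
            (2 * (a i j * (d i p q * (starRingEnd ℂ) (d j p q)))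
              + a i j * (c i p q * (starRingEnd ℂ) (c j p q))) := by
      intro p q
      simp_rw [Finset.sum_add_distrib, Finset.mul_sum]
    simp_rw [expand]
    rw [comm4 (fun p q i j => (2 * (a i j * (d i p q * (starRingEnd ℂ) (d j p q)))
              + a i j * (c i p q * (starRingEnd ℂ) (c j p q))))]
    rw [← this0]
    refine Finset.sum_congr rfl fun i _ => Finset.sum_congr rfl fun j _ => ?_
    simp_rw [Finset.sum_add_distrib, ← Finset.mul_sum]
    ring
  -- identify slices with quadratic forms
  open Matrix in
  have QD : ∀ p q : Fin k,
      ∑ i : Fin m, ∑ j : Fin m, a i j * (d i p q * (starRingEnd ℂ) (d j p q))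
        = star (fun j => (starRingEnd ℂ) (d j p q)) ⬝ᵥ a *ᵥ (fun j => (starRingEnd ℂ) (d j p q)) := by
    intro p q
    simp only [dotProduct, Matrix.mulVec, Pi.star_apply, Finset.mul_sum]
    refine Finset.sum_congr rfl fun i _ => Finset.sum_congr rfl fun j _ => ?_
    simp only [RCLike.star_def, Complex.conj_conj]
    ring
  open Matrix in
  have QC : ∀ p q : Fin k,
      ∑ i : Fin m, ∑ j : Fin m, a i j * (c i p q * (starRingEnd ℂ) (c j p q))
        = star (fun j => (starRingEnd ℂ) (c j p q)) ⬝ᵥ a *ᵥ (fun j => (starRingEnd ℂ) (c j p q)) := by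
    intro p q
    simp only [dotProduct, Matrix.mulVec, Pi.star_apply, Finset.mul_sum]
    refine Finset.sum_congr rfl fun i _ => Finset.sum_congr rfl fun j _ => ?_
    simp only [RCLike.star_def, Complex.conj_conj]
    ring
  open Matrix in
  have hnnD : ∀ p q : Fin k, (0:ℂ) ≤
      ∑ i : Fin m, ∑ j : Fin m, a i j * (d i p q * (starRingEnd ℂ) (d j p q)) := by
    intro p q; rw [QD p q]; exact ha.posSemidef.dotProduct_mulVec_nonneg _
  open Matrix in
  have hnnC : ∀ p q : Fin k, (0:ℂ) ≤
      ∑ i : Fin m, ∑ j : Fin m, a i j * (c i p q * (starRingEnd ℂ) (c j p q)) := by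
    intro p q; rw [QC p q]; exact ha.posSemidef.dotProduct_mulVec_nonneg _
  have two_nn : (0:ℂ) ≤ 2 := by norm_num
  have hterm_nn : ∀ p q : Fin k, (0:ℂ) ≤
      2 * (∑ i : Fin m, ∑ j : Fin m, a i j * (d i p q * (starRingEnd ℂ) (d j p q)))
        + ∑ i : Fin m, ∑ j : Fin m, a i j * (c i p q * (starRingEnd ℂ) (c j p q)) :=
    fun p q => add_nonneg (mul_nonneg two_nn (hnnD p q)) (hnnC p q)
  -- each slice's form vanishes
  have hzero : ∀ p q : Fin k,
      2 * (∑ i : Fin m, ∑ j : Fin m, a i j * (d i p q * (starRingEnd ℂ) (d j p q)))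
        + ∑ i : Fin m, ∑ j : Fin m, a i j * (c i p q * (starRingEnd ℂ) (c j p q)) = 0 := by
    intro p q
    have h1 := (Finset.sum_eq_zero_iff_of_nonneg
      (fun p _ => Finset.sum_nonneg (fun q _ => hterm_nn p q))).mp hA p (Finset.mem_univ p)
    exact (Finset.sum_eq_zero_iff_of_nonneg
      (fun q _ => hterm_nn p q)).mp h1 q (Finset.mem_univ q)
  have hDzero : ∀ p q : Fin k,
      ∑ i : Fin m, ∑ j : Fin m, a i j * (d i p q * (starRingEnd ℂ) (d j p q)) = 0 := by
    intro p q
    have := (add_eq_zero_iff_of_nonneg (mul_nonneg two_nn (hnnD p q)) (hnnC p q)).mp (hzero p q)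
    have h2 : (2:ℂ) ≠ 0 := by norm_num
    exact (mul_eq_zero.mp this.1).resolve_left h2
  have hCzero : ∀ p q : Fin k,
      ∑ i : Fin m, ∑ j : Fin m, a i j * (c i p q * (starRingEnd ℂ) (c j p q)) = 0 := by
    intro p q
    exact ((add_eq_zero_iff_of_nonneg (mul_nonneg two_nn (hnnD p q)) (hnnC p q)).mp (hzero p q)).2
  -- conclude via positive definiteness
  have hd : d = 0 := by
    funext i p q
    have hv : (fun j => (starRingEnd ℂ) (d j p q)) = 0 := by
      by_contra hne
      have := ha.dotProduct_mulVec_pos hne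
      rw [← QD p q, hDzero p q] at this
      exact lt_irrefl _ this
    have := congrFun hv i
    simpa using congrArg (starRingEnd ℂ) this
  have hcz : c = 0 := by
    funext i p q
    have hv : (fun j => (starRingEnd ℂ) (c j p q)) = 0 := by
      by_contra hne
      have := ha.dotProduct_mulVec_pos hne
      rw [← QC p q, hCzero p q] at this
      exact lt_irrefl _ this
    have := congrFun hv i
    simpa using congrArg (starRingEnd ℂ) this
  exact ⟨hcz, hd⟩
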